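/- arXiv:2102.13245 — 2 statements merged into one kernel-verified Lean document; each statement's English description precedes it below -/
import Mathlib

section
/- Fix a rank-r projector P_r, data y, and N ≥ 1, and let (X_r, X_⊥^{(1)},…,X_⊥^{(N)}) be distributed on Im(P_r) × Ker(P_r)^N according to the density π_tar^{y,N}(x_r, {x_⊥^{(i)}}) ∝ π_pr(x_r) (Σ_{i=1}^N L^y(x_r + x_⊥^{(i)})) Π_{j=1}^N π_pr(x_⊥^{(j)}|x_r). Conditionally on (X_r, {X_⊥^{(i)}}), select X_⊥ ∈ {X_⊥^{(1)},…,X_⊥^{(N)}} with probabilities P(X_⊥ = X_⊥^{(k)} | X_r, {X_⊥^{(i)}}) = L^y(X_r + X_⊥^{(k)}) / Σ_{i=1}^N L^y(X_r + X_⊥^{(i)}). Then the random vector X = X_r + X_⊥ is distributed according to the exact posterior density π_pos^y(x) ∝ L^y(x) π_pr(x). -/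
open MeasureTheory Matrix

noncomputable section

/-- `P` is a projector matrix of rank `r`. -/
def IsProjector {d : ℕ} (P : Matrix (Fin d) (Fin d) ℝ) (r : ℕ) : Prop :=
  P * P = P ∧ P.rank = r

/-- `p` is a probability density on `ℝ^n` (w.r.t. Lebesgue measure). -/
def IsDensity {n : ℕ} (p : (Fin n → ℝ) → ℝ) : Prop :=
  Measurable p ∧ (∀ x, 0 ≤ p x) ∧ ∫ x, p x = 1

/-- Integral of `f` over the kernel of `P` (a subspace of dimension `d − r` for a rank-`r`
projector), with respect to the `(d−r)`-dimensional Hausdorff measure. -/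
def kerIntegral {d : ℕ} (P : Matrix (Fin d) (Fin d) ℝ) (r : ℕ)
    (f : (Fin d → ℝ) → ℝ) : ℝ :=
  ∫ z in {z : Fin d → ℝ | P.mulVec z = 0}, f z ∂(μH[((d - r : ℕ) : ℝ)])

/-- Marginal density of `ρ` on `Im(P)`: `ρ(x_r) = ∫_{Ker P} ρ(x_r + x⊥) dx⊥`. -/
def margDensity {d : ℕ} (P : Matrix (Fin d) (Fin d) ℝ) (r : ℕ)
    (ρ : (Fin d → ℝ) → ℝ) (xr : Fin d → ℝ) : ℝ :=
  kerIntegral P r (fun z => ρ (xr + z))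

/-- Conditional density `ρ(x⊥ | x_r) = ρ(x_r + x⊥) / ρ(x_r)`. -/
def condDensity {d : ℕ} (P : Matrix (Fin d) (Fin d) ℝ) (r : ℕ)
    (ρ : (Fin d → ℝ) → ℝ) (xr z : Fin d → ℝ) : ℝ :=
  ρ (xr + z) / margDensity P r ρ xr

/-- Optimal parameter-reduced likelihood `L*(x_r) = ∫_{Ker P} L(x_r + x⊥) π_pr(x⊥|x_r) dx⊥`. -/
def reducedLik {d : ℕ} (P : Matrix (Fin d) (Fin d) ℝ) (r : ℕ)
    (πpr L : (Fin d → ℝ) → ℝ) (xr : Fin d → ℝ) : ℝ :=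
  kerIntegral P r (fun z => L (xr + z) * condDensity P r πpr xr z)

/-- Evidence (normalizing constant) `∫ L(x) π_pr(x) dx`. -/
def evidence {n : ℕ} (πpr L : (Fin n → ℝ) → ℝ) : ℝ := ∫ x, L x * πpr x

/-- The normalized posterior density associated with prior `πpr` and likelihood `L`. -/
def posteriorDensity {n : ℕ} (πpr L : (Fin n → ℝ) → ℝ) (x : Fin n → ℝ) : ℝ :=
  L x * πpr x / evidence πpr L

/-- The normalized approximate posterior obtained from the optimal parameter-reduced
likelihood: `π*(x) ∝ L*(P x) π_pr(x)`. -/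
def approxPosterior {d : ℕ} (P : Matrix (Fin d) (Fin d) ℝ) (r : ℕ)
    (πpr L : (Fin d → ℝ) → ℝ) (x : Fin d → ℝ) : ℝ :=
  posteriorDensity πpr (fun x' => reducedLik P r πpr L (P.mulVec x')) x

/-- Kullback–Leibler divergence of density `p` from density `q`. -/
def KLdiv {n : ℕ} (p q : (Fin n → ℝ) → ℝ) : ℝ := ∫ x, Real.log (p x / q x) * p x

/-- Gradient of `f : ℝ^n → ℝ`. -/
def grad {n : ℕ} (f : (Fin n → ℝ) → ℝ) (x : Fin n → ℝ) : Fin n → ℝ :=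
  fun i => fderiv ℝ f x (Pi.single i 1)

/-- Jacobian matrix of `G : ℝ^d → ℝ^m`. -/
def jacobian {d m : ℕ} (G : (Fin d → ℝ) → (Fin m → ℝ)) (x : Fin d → ℝ) :
    Matrix (Fin m) (Fin d) ℝ :=
  Matrix.of fun i j => fderiv ℝ (fun x' => G x' i) x (Pi.single j 1)

/-- Weighted squared norm `‖v‖²_S = vᵀ S v`. -/
def wSq {m : ℕ} (S : Matrix (Fin m) (Fin m) ℝ) (v : Fin m → ℝ) : ℝ := v ⬝ᵥ S.mulVec v

/-- The matrix `H = ∫ (∇ log L)(∇ log L)ᵀ π_pos dx`. -/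
def Hmatrix {d : ℕ} (πpr L : (Fin d → ℝ) → ℝ) : Matrix (Fin d) (Fin d) ℝ :=
  Matrix.of fun i j =>
    ∫ x, grad (fun x' => Real.log (L x')) x i * grad (fun x' => Real.log (L x')) x j *
      posteriorDensity πpr L x

/-- Subspace logarithmic Sobolev inequality for the prior `πpr` with constant `κ` and
symmetric positive definite matrix `Γ` (Assumption 1). -/
def SubspaceLogSobolev {d : ℕ} (πpr : (Fin d → ℝ) → ℝ) (κ : ℝ)
    (Γ : Matrix (Fin d) (Fin d) ℝ) : Prop :=
  ∀ (r : ℕ) (P : Matrix (Fin d) (Fin d) ℝ), IsProjector P r →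
    ∀ h : (Fin d → ℝ) → ℝ, ContDiff ℝ 1 h →
      (∫ x, (h x) ^ 2 * Real.log ((h x) ^ 2 /
          kerIntegral P r
            (fun z => (h (P.mulVec x + z)) ^ 2 * condDensity P r πpr (P.mulVec x) z)) * πpr x)
      ≤ 2 * κ *
        ∫ x, ((1 - P)ᵀ.mulVec (grad h x)) ⬝ᵥ (Γ⁻¹.mulVec ((1 - P)ᵀ.mulVec (grad h x))) * πpr x

/-- Subspace Poincaré inequality for the prior `πpr` with constant `κ` and symmetric
positive definite matrix `Γ` (Assumption 2). -/
def SubspacePoincare {d : ℕ} (πpr : (Fin d → ℝ) → ℝ) (κ : ℝ)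
    (Γ : Matrix (Fin d) (Fin d) ℝ) : Prop :=
  ∀ (r : ℕ) (P : Matrix (Fin d) (Fin d) ℝ), IsProjector P r →
    ∀ h : (Fin d → ℝ) → ℝ, ContDiff ℝ 1 h →
      (∫ x, (h x -
          kerIntegral P r
            (fun z => h (P.mulVec x + z) * condDensity P r πpr (P.mulVec x) z)) ^ 2 * πpr x)
      ≤ κ *
        ∫ x, ((1 - P)ᵀ.mulVec (grad h x)) ⬝ᵥ (Γ⁻¹.mulVec ((1 - P)ᵀ.mulVec (grad h x))) * πpr x

/-- Gaussian likelihood `L^y(x) = Z⁻¹ exp(−½‖G(x) − y‖²_{Σ⁻¹})`. -/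
def gaussLik {d m : ℕ} (G : (Fin d → ℝ) → (Fin m → ℝ)) (Sobs : Matrix (Fin m) (Fin m) ℝ)
    (y : Fin m → ℝ) (x : Fin d → ℝ) : ℝ :=
  Real.exp (-(1 / 2) * wSq Sobs⁻¹ (G x - y)) / Real.sqrt ((2 * Real.pi) ^ m * Sobs.det)

/-- Conditional expectation of a vector-valued map `G` over `Ker(P)`:
`G̃*(x_r) = ∫_{Ker P} G(x_r + x⊥) π_pr(x⊥|x_r) dx⊥`. -/
def condExpVec {d m : ℕ} (P : Matrix (Fin d) (Fin d) ℝ) (r : ℕ)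
    (πpr : (Fin d → ℝ) → ℝ) (G : (Fin d → ℝ) → (Fin m → ℝ)) (xr : Fin d → ℝ) :
    Fin m → ℝ :=
  fun i => kerIntegral P r (fun z => G (xr + z) i * condDensity P r πpr xr z)

/-- The Fisher information matrix `I(x) = ∫ (∇ₓ log L^y(x))(∇ₓ log L^y(x))ᵀ L^y(x) dy`. -/
def fisherMatrix {d m : ℕ} (L : (Fin m → ℝ) → (Fin d → ℝ) → ℝ) (x : Fin d → ℝ) :
    Matrix (Fin d) (Fin d) ℝ :=
  Matrix.of fun i j =>
    ∫ y, grad (fun x' => Real.log (L y x')) x i * grad (fun x' => Real.log (L y x')) x j * L y x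

/-- Reference (product) measure on `Im(P) × Ker(P)^N`: the `r`-dimensional Hausdorff
measure on `Im(P)` times the `N`-fold product of the `(d−r)`-dimensional Hausdorff
measure on `Ker(P)`. -/
def pmMeasure {d : ℕ} (P : Matrix (Fin d) (Fin d) ℝ) (r N : ℕ) :
    Measure ((Fin d → ℝ) × (Fin N → Fin d → ℝ)) :=
  ((μH[((r : ℕ) : ℝ)]).restrict (Set.range P.mulVec)).prod
    (Measure.pi fun _ : Fin N =>
      (μH[((d - r : ℕ) : ℝ)]).restrict {z : Fin d → ℝ | P.mulVec z = 0})

/-- Unnormalized pseudo-marginal target density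
`π_tar(x_r, {x⊥⁽ⁱ⁾}) ∝ π_pr(x_r) (Σᵢ L(x_r + x⊥⁽ⁱ⁾)) Πⱼ π_pr(x⊥⁽ʲ⁾|x_r)`. -/
def pmTarget {d N : ℕ} (P : Matrix (Fin d) (Fin d) ℝ) (r : ℕ)
    (πpr L : (Fin d → ℝ) → ℝ) (s : (Fin d → ℝ) × (Fin N → Fin d → ℝ)) : ℝ :=
  margDensity P r πpr s.1 * (∑ i, L (s.1 + s.2 i)) *
    ∏ j, condDensity P r πpr s.1 (s.2 j)

/-- Pseudo-marginal proposal density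
`Q(x_r†, {x⊥†⁽ⁱ⁾} | x_r, {x⊥⁽ⁱ⁾}) = q(x_r†|x_r) Πᵢ π_pr(x⊥†⁽ⁱ⁾|x_r†)`. -/
def pmProposal {d N : ℕ} (P : Matrix (Fin d) (Fin d) ℝ) (r : ℕ)
    (πpr : (Fin d → ℝ) → ℝ) (q : (Fin d → ℝ) → (Fin d → ℝ) → ℝ)
    (t s : (Fin d → ℝ) × (Fin N → Fin d → ℝ)) : ℝ :=
  q t.1 s.1 * ∏ i, condDensity P r πpr t.1 (t.2 i)

/-- Pseudo-marginal acceptance probability `α̂_N(x_r†|x_r)`. -/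
def pmAccept {d N : ℕ} (P : Matrix (Fin d) (Fin d) ℝ) (r : ℕ)
    (πpr L : (Fin d → ℝ) → ℝ) (q : (Fin d → ℝ) → (Fin d → ℝ) → ℝ)
    (t s : (Fin d → ℝ) × (Fin N → Fin d → ℝ)) : ℝ :=
  min 1 ((margDensity P r πpr t.1 * (∑ i, L (t.1 + t.2 i)) * q s.1 t.1) /
    (margDensity P r πpr s.1 * (∑ i, L (s.1 + s.2 i)) * q t.1 s.1))


open Module Set ENNReal

theorem lintegral_pi_prod {α : Type*} [MeasurableSpace α] (μ : Measure α) [SigmaFinite μ] :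
    ∀ {N : ℕ} (h : Fin N → α → ℝ≥0∞), (∀ j, Measurable (h j)) →
    ∫⁻ z : Fin N → α, ∏ j, h j (z j) ∂(Measure.pi fun _ => μ) = ∏ j, ∫⁻ x, h j x ∂μ := by
  intro N
  induction N with
  | zero =>
    intro h hm
    simp [lintegral_const, Measure.pi_univ]
  | succ n ih =>
    intro h hm
    have hmp := measurePreserving_piFinSuccAbove (fun _ : Fin (n+1) => μ) 0
    have key := ((hmp.symm (MeasurableEquiv.piFinSuccAbove (fun _ => α) 0)).lintegral_comp
      (f := fun z : Fin (n+1) → α => ∏ j, h j (z j)) (by fun_prop)).symm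
    rw [key]
    have heq : ∀ p : α × (Fin n → α),
        ((MeasurableEquiv.piFinSuccAbove (fun _ : Fin (n+1) => α) 0).symm p)
          = Fin.cons p.1 p.2 := by
      intro p
      ext j
      simp [MeasurableEquiv.piFinSuccAbove, Fin.insertNth_zero]
    calc ∫⁻ p : α × (Fin n → α), (∏ j, h j
            (((MeasurableEquiv.piFinSuccAbove (fun _ : Fin (n+1) => α) 0).symm p) j))
            ∂((μ).prod (Measure.pi fun _ : Fin n => μ))
        = ∫⁻ p : α × (Fin n → α), (h 0 p.1) * ∏ j : Fin n, h j.succ (p.2 j)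
            ∂((μ).prod (Measure.pi fun _ : Fin n => μ)) := by
          refine lintegral_congr fun p => ?_
          rw [heq p, Fin.prod_univ_succ]
          simp
      _ = (∫⁻ x, h 0 x ∂μ) * ∫⁻ y : Fin n → α, ∏ j : Fin n, h j.succ (y j)
            ∂(Measure.pi fun _ : Fin n => μ) := by
          exact lintegral_prod_mul (μ := μ) (ν := Measure.pi fun _ : Fin n => μ) (f := h 0) (g := fun y => ∏ j : Fin n, h j.succ (y j))
            (hm 0).aemeasurable
            (Finset.measurable_prod _ (fun j _ => (hm j.succ).comp (measurable_pi_apply j))).aemeasurable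
      _ = ∏ j, ∫⁻ x, h j x ∂μ := by
          rw [ih (fun j => h j.succ) (fun j => hm j.succ), Fin.prod_univ_succ]


/-- Coarea-type identity for a projector. -/
theorem coarea' {d r : ℕ} (P : Matrix (Fin d) (Fin d) ℝ)
    (hP1 : P * P = P) (hP2 : P.rank = r) :
    ∃ c : ℝ≥0∞, c ≠ 0 ∧ c ≠ ⊤ ∧
      SigmaFinite ((μH[((d - r : ℕ) : ℝ)]).restrict {z : Fin d → ℝ | P.mulVec z = 0}) ∧
      SigmaFinite ((μH[((r : ℕ) : ℝ)]).restrict (Set.range P.mulVec)) ∧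
      ∀ f : (Fin d → ℝ) → ℝ≥0∞, Measurable f →
        (∫⁻ u, ∫⁻ v, f (u + v)
            ∂((μH[((d - r : ℕ) : ℝ)]).restrict {z : Fin d → ℝ | P.mulVec z = 0})
          ∂((μH[((r : ℕ) : ℝ)]).restrict (Set.range P.mulVec)))
        = c * ∫⁻ x, f x := by
  classical
  set f := P.mulVecLin with hf
  have hidem : ∀ x, f (f x) = f x := by
    intro x
    simp [hf, Matrix.mulVecLin_apply, Matrix.mulVec_mulVec, hP1]
  set V1 := LinearMap.range f with hV1
  set V0 := LinearMap.ker f with hV0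
  have hcompl : IsCompl V1 V0 := by
    have hp : LinearMap.IsProj V1 f := by
      constructor
      · exact fun x => LinearMap.mem_range_self f x
      · rintro x ⟨y, rfl⟩; exact hidem y
    exact hp.isCompl
  have hr1 : finrank ℝ V1 = r := hP2
  have hr0 : finrank ℝ V0 = d - r := by
    have h := LinearMap.finrank_range_add_finrank_ker f
    have hd : finrank ℝ (Fin d → ℝ) = d := by simp
    rw [← hV1, ← hV0, hd, hr1] at h
    omega
  -- sets
  have hE1set : (V1 : Set (Fin d → ℝ)) = Set.range P.mulVec := by
    ext x; simp [hV1, hf, LinearMap.mem_range, Matrix.mulVecLin_apply, Set.mem_range]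
  have hE0set : (V0 : Set (Fin d → ℝ)) = {z : Fin d → ℝ | P.mulVec z = 0} := by
    ext x; simp [hV0, hf, LinearMap.mem_ker, Matrix.mulVecLin_apply]
  -- subtype measures
  have hV1closed : IsClosed (V1 : Set (Fin d → ℝ)) := V1.closed_of_finiteDimensional
  have hV0closed : IsClosed (V0 : Set (Fin d → ℝ)) := V0.closed_of_finiteDimensional
  have hV1meas : MeasurableSet (V1 : Set (Fin d → ℝ)) := hV1closed.measurableSet
  have hV0meas : MeasurableSet (V0 : Set (Fin d → ℝ)) := hV0closed.measurableSet
  have hemb1 : MeasurableEmbedding (Subtype.val : V1 → (Fin d → ℝ)) :=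
    MeasurableEmbedding.subtype_coe hV1meas
  have hemb0 : MeasurableEmbedding (Subtype.val : V0 → (Fin d → ℝ)) :=
    MeasurableEmbedding.subtype_coe hV0meas
  set μ1 : Measure V1 := μH[((r : ℕ) : ℝ)] with hμ1
  set μ0 : Measure V0 := μH[((d - r : ℕ) : ℝ)] with hμ0
  haveI hμ1Haar : μ1.IsAddHaarMeasure := by
    rw [hμ1, ← hr1]; exact isAddHaarMeasure_hausdorffMeasure
  haveI hμ0Haar : μ0.IsAddHaarMeasure := by
    rw [hμ0, ← hr0]; exact isAddHaarMeasure_hausdorffMeasure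
  -- identify restricted Hausdorff measures with pushforwards
  have hmap1 : (μH[((r : ℕ) : ℝ)]).restrict (Set.range P.mulVec)
      = μ1.map (Subtype.val : V1 → (Fin d → ℝ)) := by
    ext A hA
    rw [Measure.restrict_apply hA, hemb1.map_apply]
    rw [← Isometry.hausdorffMeasure_image (isometry_subtype_coe) (Or.inl (by positivity))
      ((Subtype.val : V1 → (Fin d → ℝ)) ⁻¹' A)]
    congr 1
    ext x
    simp only [Set.mem_image, Set.mem_preimage, Set.mem_inter_iff, ← hE1set, SetLike.mem_coe]
    constructor
    · rintro ⟨h1, h2⟩; exact ⟨⟨x, h2⟩, h1, rfl⟩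
    · rintro ⟨⟨y, hy⟩, h1, rfl⟩; exact ⟨h1, hy⟩
  have hmap0 : (μH[((d - r : ℕ) : ℝ)]).restrict {z : Fin d → ℝ | P.mulVec z = 0}
      = μ0.map (Subtype.val : V0 → (Fin d → ℝ)) := by
    ext A hA
    rw [Measure.restrict_apply hA, hemb0.map_apply]
    rw [← Isometry.hausdorffMeasure_image (isometry_subtype_coe) (Or.inl (by positivity))
      ((Subtype.val : V0 → (Fin d → ℝ)) ⁻¹' A)]
    congr 1
    ext x
    simp only [Set.mem_image, Set.mem_preimage, Set.mem_inter_iff, ← hE0set, SetLike.mem_coe]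
    constructor
    · rintro ⟨h1, h2⟩; exact ⟨⟨x, h2⟩, h1, rfl⟩
    · rintro ⟨⟨y, hy⟩, h1, rfl⟩; exact ⟨h1, hy⟩
  haveI hsf1 : SigmaFinite ((μH[((r : ℕ) : ℝ)]).restrict (Set.range P.mulVec)) := by
    rw [hmap1]; exact hemb1.sigmaFinite_map
  haveI hsf0 : SigmaFinite ((μH[((d - r : ℕ) : ℝ)]).restrict {z : Fin d → ℝ | P.mulVec z = 0}) := by
    rw [hmap0]; exact hemb0.sigmaFinite_map
  -- the equivalence
  set e : (V1 × V0) ≃L[ℝ] (Fin d → ℝ) :=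
    (Submodule.prodEquivOfIsCompl V1 V0 hcompl).toContinuousLinearEquiv with he
  have heapp : ∀ (u : V1) (v : V0), e (u, v) = (u : Fin d → ℝ) + v := by
    intro u v
    show (Submodule.prodEquivOfIsCompl V1 V0 hcompl) (u, v) = (u : Fin d → ℝ) + v
    simp [Submodule.coe_prodEquivOfIsCompl]
  haveI hprodHaar : (μ1.prod μ0).IsAddHaarMeasure := Measure.prod.instIsAddHaarMeasure μ1 μ0
  set ν : Measure (Fin d → ℝ) := (μ1.prod μ0).map e with hν
  haveI hνHaar : ν.IsAddHaarMeasure := e.isAddHaarMeasure_map _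
  have huniq : ν = ν.addHaarScalarFactor volume • volume :=
    Measure.isAddLeftInvariant_eq_smul ν volume
  refine ⟨(ν.addHaarScalarFactor volume : ℝ≥0∞), ?_, ?_, hsf0, hsf1, ?_⟩
  · exact_mod_cast (Measure.addHaarScalarFactor_pos_of_isAddHaarMeasure ν volume).ne'
  · exact ENNReal.coe_ne_top
  intro g hg
  have hinner : Measurable fun u : Fin d → ℝ => ∫⁻ v, g (u + v)
      ∂((μH[((d - r : ℕ) : ℝ)]).restrict {z : Fin d → ℝ | P.mulVec z = 0}) := by
    exact Measurable.lintegral_prod_right (f := fun u v => g (u + v)) (by fun_prop)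
  calc ∫⁻ u, ∫⁻ v, g (u + v)
        ∂((μH[((d - r : ℕ) : ℝ)]).restrict {z : Fin d → ℝ | P.mulVec z = 0})
        ∂((μH[((r : ℕ) : ℝ)]).restrict (Set.range P.mulVec))
      = ∫⁻ (u : V1), ∫⁻ (v : V0), g ((u : Fin d → ℝ) + v) ∂μ0 ∂μ1 := by
        rw [hmap1, lintegral_map hinner hemb1.measurable]
        refine lintegral_congr fun u => ?_
        rw [hmap0, lintegral_map (by fun_prop) hemb0.measurable]
    _ = ∫⁻ p : V1 × V0, g ((p.1 : Fin d → ℝ) + p.2) ∂(μ1.prod μ0) := by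
        rw [lintegral_prod]
        fun_prop
    _ = ∫⁻ p : V1 × V0, g (e p) ∂(μ1.prod μ0) :=
        lintegral_congr fun p => congrArg g (heapp p.1 p.2).symm
    _ = ∫⁻ x, g x ∂ν := by
        rw [hν, lintegral_map hg e.continuous.measurable]
    _ = (ν.addHaarScalarFactor volume : ℝ≥0∞) * ∫⁻ x, g x := by
        have h2 := congrArg (fun m : Measure (Fin d → ℝ) => ∫⁻ x, g x ∂m) huniq
        beta_reduce at h2
        rw [lintegral_smul_measure, ENNReal.smul_def, smul_eq_mul] at h2
        exact h2

/-- Key computation. -/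
theorem lemB {d : ℕ} (N : ℕ) (hN : 1 ≤ N)
    (πpr : (Fin d → ℝ) → ℝ) (hπm : Measurable πpr) (hπ0 : ∀ x, 0 ≤ πpr x)
    (r : ℕ) (P : Matrix (Fin d) (Fin d) ℝ) (c : ℝ≥0∞)
    (hsf0 : SigmaFinite ((μH[((d - r : ℕ) : ℝ)]).restrict {z : Fin d → ℝ | P.mulVec z = 0}))
    (hsf1 : SigmaFinite ((μH[((r : ℕ) : ℝ)]).restrict (Set.range P.mulVec)))
    (hco : ∀ f : (Fin d → ℝ) → ℝ≥0∞, Measurable f →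
      (∫⁻ u, ∫⁻ v, f (u + v)
          ∂((μH[((d - r : ℕ) : ℝ)]).restrict {z : Fin d → ℝ | P.mulVec z = 0})
        ∂((μH[((r : ℕ) : ℝ)]).restrict (Set.range P.mulVec)))
      = c * ∫⁻ x, f x)
    (hπint : ∫⁻ x, ENNReal.ofReal (πpr x) = 1) (hcfin : c ≠ ⊤)
    (f : (Fin d → ℝ) → ℝ) (hf : Measurable f) (hf0 : ∀ x, 0 ≤ f x) :
    (∫ s, (∑ k, f (s.1 + s.2 k) *
        (margDensity P r πpr s.1 * ∏ j, condDensity P r πpr s.1 (s.2 j)))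
      ∂(pmMeasure P r N))
    = ((N : ℝ≥0∞) * c * ∫⁻ x, ENNReal.ofReal (f x * πpr x)).toReal := by
  classical
  set ν0 : Measure (Fin d → ℝ) :=
    (μH[((d - r : ℕ) : ℝ)]).restrict {z : Fin d → ℝ | P.mulVec z = 0} with hν0
  set ν1 : Measure (Fin d → ℝ) :=
    (μH[((r : ℕ) : ℝ)]).restrict (Set.range P.mulVec) with hν1
  haveI := hsf0
  haveI := hsf1
  set m : (Fin d → ℝ) → ℝ := margDensity P r πpr with hm
  set Pf : (Fin d → ℝ) → ℝ≥0∞ := fun x => ENNReal.ofReal (πpr x) with hPf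
  set F : (Fin d → ℝ) → ℝ≥0∞ := fun x => ENNReal.ofReal (f x) with hF
  set I : (Fin d → ℝ) → ℝ≥0∞ := fun u => ∫⁻ v, Pf (u + v) ∂ν0 with hI
  have hI_meas : Measurable I :=
    Measurable.lintegral_prod_right (f := fun u v => Pf (u + v)) (by fun_prop)
  have hm_eq : ∀ u, m u = (I u).toReal := by
    intro u
    rw [hm]
    show (∫ z, πpr (u + z) ∂ν0) = (I u).toReal
    rw [integral_eq_lintegral_of_nonneg_ae (ae_of_all _ fun z => hπ0 _)
      ((hπm.comp (by fun_prop)).aestronglyMeasurable)]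
  have hm_nonneg : ∀ u, 0 ≤ m u := by
    intro u; rw [hm_eq]; exact ENNReal.toReal_nonneg
  have hm_meas : Measurable m := by
    have : m = fun u => (I u).toReal := funext hm_eq
    rw [this]; exact hI_meas.ennreal_toReal
  have hcond_nonneg : ∀ u v, 0 ≤ condDensity P r πpr u v := by
    intro u v; exact div_nonneg (hπ0 _) (hm_nonneg u)
  set C : (Fin d → ℝ) → (Fin d → ℝ) → ℝ≥0∞ :=
    fun u v => ENNReal.ofReal (condDensity P r πpr u v) with hC
  have hC_meas : Measurable (Function.uncurry C) := by
    apply ENNReal.measurable_ofReal.comp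
    exact (hπm.comp (by fun_prop)).div (hm_meas.comp measurable_fst)
  -- the real integrand is nonnegative and measurable
  have hintnn : ∀ s : (Fin d → ℝ) × (Fin N → Fin d → ℝ),
      0 ≤ ∑ k, f (s.1 + s.2 k) * (m s.1 * ∏ j, condDensity P r πpr s.1 (s.2 j)) := by
    intro s
    refine Finset.sum_nonneg fun k _ => mul_nonneg (hf0 _) (mul_nonneg (hm_nonneg _) ?_)
    exact Finset.prod_nonneg fun j _ => hcond_nonneg _ _
  have hintmeas : Measurable fun s : (Fin d → ℝ) × (Fin N → Fin d → ℝ) =>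
      ∑ k, f (s.1 + s.2 k) * (m s.1 * ∏ j, condDensity P r πpr s.1 (s.2 j)) := by
    refine Finset.measurable_sum _ fun k _ => ?_
    refine ((hf.comp ?_).mul ((hm_meas.comp measurable_fst).mul
      (Finset.measurable_prod _ fun j _ => ?_)))
    · exact measurable_fst.add ((measurable_pi_apply k).comp measurable_snd)
    · exact (hπm.comp (measurable_fst.add
        ((measurable_pi_apply j).comp measurable_snd))).div (hm_meas.comp measurable_fst)
  rw [integral_eq_lintegral_of_nonneg_ae (ae_of_all _ hintnn) hintmeas.aestronglyMeasurable]
  congr 1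
  -- pass to ennreal-valued integrand
  have hofReal : ∀ s : (Fin d → ℝ) × (Fin N → Fin d → ℝ),
      ENNReal.ofReal (∑ k, f (s.1 + s.2 k) *
          (m s.1 * ∏ j, condDensity P r πpr s.1 (s.2 j)))
      = ∑ k, F (s.1 + s.2 k) * (ENNReal.ofReal (m s.1) * ∏ j, C s.1 (s.2 j)) := by
    intro s
    rw [ENNReal.ofReal_sum_of_nonneg (fun k _ => by
      exact mul_nonneg (hf0 _) (mul_nonneg (hm_nonneg _)
        (Finset.prod_nonneg fun j _ => hcond_nonneg _ _)))]
    refine Finset.sum_congr rfl fun k _ => ?_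
    rw [ENNReal.ofReal_mul (hf0 _), ENNReal.ofReal_mul (hm_nonneg _),
      ENNReal.ofReal_prod_of_nonneg (fun j _ => hcond_nonneg _ _)]
  rw [lintegral_congr hofReal]
  -- Tonelli on the product measure
  have hpm : pmMeasure P r N = ν1.prod (Measure.pi fun _ : Fin N => ν0) := rfl
  rw [hpm, lintegral_prod _ (by
    refine (Finset.measurable_sum _ fun k _ => ?_).aemeasurable
    refine (ENNReal.measurable_ofReal.comp (hf.comp
      (measurable_fst.add ((measurable_pi_apply k).comp measurable_snd)))).mul ?_
    refine ((ENNReal.measurable_ofReal.comp (hm_meas.comp measurable_fst)).mul ?_)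
    refine Finset.measurable_prod _ fun j _ => ?_
    exact hC_meas.comp (measurable_fst.prodMk
      ((measurable_pi_apply j).comp measurable_snd)))]
  -- compute the inner integral over the pi measure, a.e. in u
  set J : (Fin d → ℝ) → ℝ≥0∞ := fun u => ∫⁻ v, F (u + v) * Pf (u + v) ∂ν0 with hJ
  have hIae : ∀ᵐ u ∂ν1, I u ≠ ⊤ := by
    have : ∫⁻ u, I u ∂ν1 = c * 1 := by
      rw [← hπint]; exact hco Pf (by fun_prop)
    refine ae_lt_top hI_meas ?_ |>.mono fun u h => h.ne
    rw [this, mul_one]; exact hcfin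
  have hslice : ∀ u : Fin d → ℝ, I u ≠ ⊤ →
      (∫⁻ z : Fin N → Fin d → ℝ, ∑ k, F (u + z k) *
          (ENNReal.ofReal (m u) * ∏ j, C u (z j))
        ∂(Measure.pi fun _ : Fin N => ν0))
      = (N : ℝ≥0∞) * J u := by
    intro u hu
    have hCu_meas : Measurable (C u) := hC_meas.comp (measurable_const.prodMk measurable_id)
    have hsum : ∀ z : Fin N → Fin d → ℝ,
        (∑ k, F (u + z k) * (ENNReal.ofReal (m u) * ∏ j, C u (z j)))
        = ∑ k, ENNReal.ofReal (m u) * ∏ j,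
            ((if j = k then F (u + z j) else 1) * C u (z j)) := by
      intro z
      refine Finset.sum_congr rfl fun k _ => ?_
      rw [Finset.prod_mul_distrib, Finset.prod_ite_eq' Finset.univ k
        (fun j => F (u + z j))]
      simp only [Finset.mem_univ, if_true]
      ring
    rw [lintegral_congr hsum, lintegral_finset_sum _ (fun k _ => by
      refine Measurable.const_mul ?_ _
      refine Finset.measurable_prod _ fun j _ => ?_
      refine Measurable.mul ?_ (hCu_meas.comp (measurable_pi_apply j))
      refine Measurable.ite (by simp) ?_ measurable_const
      exact (ENNReal.measurable_ofReal.comp (hf.comp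
        (measurable_const.add (measurable_pi_apply j)))))]
    have hterm : ∀ k : Fin N,
        (∫⁻ z : Fin N → Fin d → ℝ, ENNReal.ofReal (m u) * ∏ j,
            ((if j = k then F (u + z j) else 1) * C u (z j))
          ∂(Measure.pi fun _ : Fin N => ν0)) = J u := by
      intro k
      rw [lintegral_const_mul _ (by
        refine Finset.measurable_prod _ fun j _ => ?_
        refine Measurable.mul ?_ (hCu_meas.comp (measurable_pi_apply j))
        refine Measurable.ite (by simp) ?_ measurable_const
        exact (ENNReal.measurable_ofReal.comp (hf.comp
          (measurable_const.add (measurable_pi_apply j)))))]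
      rw [lintegral_pi_prod ν0 (fun j v => (if j = k then F (u + v) else 1) * C u v)
        (fun j => by
          refine Measurable.mul ?_ hCu_meas
          refine Measurable.ite (by simp) ?_ measurable_const
          exact (ENNReal.measurable_ofReal.comp (hf.comp
            (measurable_const.add measurable_id))))]
      -- split the product over j = k and j ≠ k
      rw [← Finset.mul_prod_erase Finset.univ _ (Finset.mem_univ k)]
      have hkfac : (∫⁻ v, (if k = k then F (u + v) else 1) * C u v ∂ν0)
          = ∫⁻ v, F (u + v) * C u v ∂ν0 :=
        lintegral_congr fun v => by rw [if_pos rfl]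
      rw [hkfac]
      have herase : ∀ j ∈ Finset.univ.erase k,
          (∫⁻ v, (if j = k then F (u + v) else 1) * C u v ∂ν0)
          = ∫⁻ v, C u v ∂ν0 := by
        intro j hj
        have : j ≠ k := (Finset.mem_erase.mp hj).1
        simp [this]
      rw [Finset.prod_congr rfl herase, Finset.prod_const]
      by_cases hmu : m u = 0
      · -- conditional density vanishes identically
        have hCzero : ∀ v, C u v = 0 := by
          intro v
          show ENNReal.ofReal (condDensity P r πpr u v) = 0
          unfold condDensity
          rw [show margDensity P r πpr u = m u from rfl, hmu]
          simp
        have hIzero : I u = 0 := by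
          have h2 := hm_eq u
          rw [hmu] at h2
          rcases ENNReal.toReal_eq_zero_iff (I u) |>.mp h2.symm with h | h
          · exact h
          · exact absurd h hu
        have hJzero : J u = 0 := by
          show (∫⁻ v, F (u + v) * Pf (u + v) ∂ν0) = 0
          have hPf0 : ∀ᵐ v ∂ν0, Pf (u + v) = 0 := by
            have h3 := (lintegral_eq_zero_iff
              (by fun_prop : Measurable fun v => Pf (u + v))).mp hIzero
            filter_upwards [h3] with v hv using hv
          rw [lintegral_congr_ae (hPf0.mono fun v hv => by rw [hv, mul_zero])]
          simp
        have h1 : (∫⁻ v, F (u + v) * C u v ∂ν0) = 0 := by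
          rw [lintegral_congr fun v => by rw [hCzero v, mul_zero]]
          simp
        rw [h1, hmu, hJzero]
        simp
      · -- positive marginal: conditional density integrates to one
        have hmpos : 0 < m u := lt_of_le_of_ne (hm_nonneg u) (Ne.symm hmu)
        have hIval : I u = ENNReal.ofReal (m u) := by
          rw [hm_eq u]
          exact (ENNReal.ofReal_toReal hu).symm
        have hq0 : ENNReal.ofReal (m u) ≠ 0 := by
          simp [ENNReal.ofReal_eq_zero, not_le, hmpos]
        have hqt : ENNReal.ofReal (m u) ≠ ⊤ := ENNReal.ofReal_ne_top
        have hCval : ∀ v, C u v = Pf (u + v) / ENNReal.ofReal (m u) := by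
          intro v
          show ENNReal.ofReal (condDensity P r πpr u v) = _
          unfold condDensity
          rw [show margDensity P r πpr u = m u from rfl,
            ENNReal.ofReal_div_of_pos hmpos]
        have hCint : (∫⁻ v, C u v ∂ν0) = 1 := by
          rw [lintegral_congr fun v => by rw [hCval v, div_eq_mul_inv]]
          rw [lintegral_mul_const' _ _ (by simpa using hq0)]
          rw [show (∫⁻ v, Pf (u + v) ∂ν0) = I u from rfl, hIval,
            ← div_eq_mul_inv, ENNReal.div_self hq0 hqt]
        have hFC : (∫⁻ v, F (u + v) * C u v ∂ν0) = J u / ENNReal.ofReal (m u) := by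
          rw [lintegral_congr fun v => by
            rw [hCval v, div_eq_mul_inv, ← mul_assoc]]
          rw [lintegral_mul_const' _ _ (by simpa using hq0), ← div_eq_mul_inv]
        rw [hCint, hFC, one_pow, mul_one, ENNReal.mul_div_cancel hq0 hqt]
    rw [Finset.sum_congr rfl fun k _ => hterm k, Finset.sum_const]
    simp [Finset.card_univ]
  calc (∫⁻ u, ∫⁻ z : Fin N → Fin d → ℝ, ∑ k, F (u + z k) *
          (ENNReal.ofReal (m u) * ∏ j, C u (z j))
        ∂(Measure.pi fun _ : Fin N => ν0) ∂ν1)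
      = ∫⁻ u, (N : ℝ≥0∞) * J u ∂ν1 := by
        refine lintegral_congr_ae ?_
        filter_upwards [hIae] with u hu using hslice u hu
    _ = (N : ℝ≥0∞) * ∫⁻ u, J u ∂ν1 := lintegral_const_mul _ (by
        exact Measurable.lintegral_prod_right (f := fun u v => F (u + v) * Pf (u + v))
          (by fun_prop))
    _ = (N : ℝ≥0∞) * c * ∫⁻ x, ENNReal.ofReal (f x * πpr x) := by
        rw [hco (fun x => F x * Pf x) (by fun_prop), ← mul_assoc]
        congr 1
        exact lintegral_congr fun x => (ENNReal.ofReal_mul (hf0 x)).symm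

/-- Proposition 4. If `(X_r, {X⊥⁽ⁱ⁾})` is distributed according to the
pseudo-marginal target `π_tar^{y,N}` and `X⊥` is selected among `{X⊥⁽ⁱ⁾}` with
probabilities proportional to `L^y(X_r + X⊥⁽ᵏ⁾)`, then `X = X_r + X⊥` is distributed
according to the exact posterior `π_pos^y`; equivalently, for every nonnegative
measurable test function `φ`, the expectations agree. -/
theorem statement15 {d : ℕ} (N : ℕ) (hN : 1 ≤ N)
    (πpr : (Fin d → ℝ) → ℝ) (hπpr : IsDensity πpr)
    (L : (Fin d → ℝ) → ℝ) (hL_meas : Measurable L) (hL_nonneg : ∀ x, 0 ≤ L x)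
    (hpos : 0 < evidence πpr L)
    (r : ℕ) (P : Matrix (Fin d) (Fin d) ℝ) (hP : IsProjector P r) :
    ∀ φ : (Fin d → ℝ) → ℝ, Measurable φ → (∀ x, 0 ≤ φ x) →
      (∫ s, (∑ k, L (s.1 + s.2 k) / (∑ i, L (s.1 + s.2 i)) * φ (s.1 + s.2 k)) *
          (pmTarget P r πpr L s / ∫ s', pmTarget P r πpr L s' ∂(pmMeasure P r N))
        ∂(pmMeasure P r N))
        = ∫ x, φ x * posteriorDensity πpr L x := by
  classical
  obtain ⟨hπm, hπ0, hπ1⟩ := hπpr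
  obtain ⟨c, hc0, hcfin, hsf0, hsf1, hco⟩ := coarea' P hP.1 hP.2
  intro φ hφm hφ0
  -- lintegral facts about the prior and the evidence
  have hπint : (∫⁻ x, ENNReal.ofReal (πpr x)) = 1 := by
    have h1 := hπ1
    rw [integral_eq_lintegral_of_nonneg_ae (ae_of_all _ hπ0)
      hπm.aestronglyMeasurable] at h1
    have hne : (∫⁻ x, ENNReal.ofReal (πpr x)) ≠ ⊤ := by
      intro h; rw [h] at h1; simp at h1
    rw [← ENNReal.ofReal_toReal hne, h1, ENNReal.ofReal_one]
  have hEeq : evidence πpr L = (∫⁻ x, ENNReal.ofReal (L x * πpr x)).toReal := by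
    unfold evidence
    exact integral_eq_lintegral_of_nonneg_ae
      (ae_of_all _ fun x => mul_nonneg (hL_nonneg x) (hπ0 x))
      (hL_meas.mul hπm).aestronglyMeasurable
  have hKLfin : (∫⁻ x, ENNReal.ofReal (L x * πpr x)) ≠ ⊤ := by
    intro h; rw [hEeq, h] at hpos; simp at hpos
  have hKLval : (∫⁻ x, ENNReal.ofReal (L x * πpr x))
      = ENNReal.ofReal (evidence πpr L) := by
    rw [hEeq, ENNReal.ofReal_toReal hKLfin]
  -- rewrite the normalizing constant
  set Z : ℝ := ∫ s', pmTarget P r πpr L s' ∂(pmMeasure P r N) with hZdef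
  have hZpt : ∀ s : (Fin d → ℝ) × (Fin N → Fin d → ℝ), pmTarget P r πpr L s
      = ∑ i, L (s.1 + s.2 i) *
          (margDensity P r πpr s.1 * ∏ j, condDensity P r πpr s.1 (s.2 j)) := by
    intro s
    unfold pmTarget
    rw [show margDensity P r πpr s.1 * (∑ i, L (s.1 + s.2 i)) *
          ∏ j, condDensity P r πpr s.1 (s.2 j)
        = (∑ i, L (s.1 + s.2 i)) *
          (margDensity P r πpr s.1 * ∏ j, condDensity P r πpr s.1 (s.2 j)) by ring,
      Finset.sum_mul]
  have hZval : Z = ((N : ℝ≥0∞) * c *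
      ENNReal.ofReal (evidence πpr L)).toReal := by
    rw [hZdef, integral_congr_ae (ae_of_all _ hZpt),
      lemB N hN πpr hπm hπ0 r P c hsf0 hsf1 hco hπint hcfin L hL_meas hL_nonneg, hKLval]
  -- pointwise identity for the selected-sample integrand
  have hpt : ∀ s : (Fin d → ℝ) × (Fin N → Fin d → ℝ),
      (∑ k, L (s.1 + s.2 k) / (∑ i, L (s.1 + s.2 i)) * φ (s.1 + s.2 k)) *
        (pmTarget P r πpr L s / Z)
      = (∑ k, (fun x => L x * φ x) (s.1 + s.2 k) *
          (margDensity P r πpr s.1 * ∏ j, condDensity P r πpr s.1 (s.2 j))) / Z := by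
    intro s
    set S : ℝ := ∑ i, L (s.1 + s.2 i) with hS
    set Q : ℝ := margDensity P r πpr s.1 * ∏ j, condDensity P r πpr s.1 (s.2 j) with hQ
    have hpm : pmTarget P r πpr L s = S * Q := by
      unfold pmTarget; rw [hS, hQ]; ring
    by_cases hS0 : S = 0
    · have hLz : ∀ i, L (s.1 + s.2 i) = 0 := by
        intro i
        have h5 := (Finset.sum_eq_zero_iff_of_nonneg
          (fun i _ => hL_nonneg (s.1 + s.2 i))).mp (hS ▸ hS0)
        exact h5 i (Finset.mem_univ i)
      simp [hLz, hpm, hS0]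
    · have h4 : (∑ k, L (s.1 + s.2 k) / S * φ (s.1 + s.2 k)) * S
          = ∑ k, L (s.1 + s.2 k) * φ (s.1 + s.2 k) := by
        rw [Finset.sum_mul]
        refine Finset.sum_congr rfl fun k _ => ?_
        field_simp
      calc (∑ k, L (s.1 + s.2 k) / S * φ (s.1 + s.2 k)) * (pmTarget P r πpr L s / Z)
          = ((∑ k, L (s.1 + s.2 k) / S * φ (s.1 + s.2 k)) * S) * Q / Z := by
            rw [hpm]; ring
        _ = (∑ k, L (s.1 + s.2 k) * φ (s.1 + s.2 k)) * Q / Z := by rw [h4]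
        _ = (∑ k, (fun x => L x * φ x) (s.1 + s.2 k) * Q) / Z := by
            rw [← Finset.sum_mul]
  rw [integral_congr_ae (ae_of_all _ hpt), integral_div,
    lemB N hN πpr hπm hπ0 r P c hsf0 hsf1 hco hπint hcfin (fun x => L x * φ x)
      (hL_meas.mul hφm) (fun x => mul_nonneg (hL_nonneg x) (hφ0 x)), hZval]
  -- right-hand side
  have hRHSpt : ∀ x, φ x * posteriorDensity πpr L x
      = (L x * φ x * πpr x) / evidence πpr L := by
    intro x; unfold posteriorDensity; ring
  rw [integral_congr_ae (ae_of_all _ hRHSpt), integral_div,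
    integral_eq_lintegral_of_nonneg_ae
      (ae_of_all _ fun x => mul_nonneg (mul_nonneg (hL_nonneg x) (hφ0 x)) (hπ0 x))
      ((hL_meas.mul hφm).mul hπm).aestronglyMeasurable]
  -- final arithmetic in ℝ≥0∞
  set K : ℝ≥0∞ := ∫⁻ x, ENNReal.ofReal (L x * φ x * πpr x) with hK
  set a : ℝ≥0∞ := (N : ℝ≥0∞) * c with ha
  have haz : a ≠ 0 := by
    rw [ha]
    exact mul_ne_zero (Nat.cast_ne_zero.mpr (by omega)) hc0
  have hat : a ≠ ⊤ := by
    rw [ha]; exact ENNReal.mul_ne_top (ENNReal.natCast_ne_top N) hcfin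
  have hatR : 0 < a.toReal := ENNReal.toReal_pos haz hat
  have hdenom : (a * ENNReal.ofReal (evidence πpr L)).toReal
      = a.toReal * evidence πpr L := by
    rw [ENNReal.toReal_mul, ENNReal.toReal_ofReal hpos.le]
  by_cases hKt : K = ⊤
  · rw [hKt, ENNReal.mul_top haz]
    simp
  · rw [ENNReal.toReal_mul, ENNReal.toReal_mul, hdenom,
      show ((N : ℝ≥0∞)).toReal * c.toReal = a.toReal by rw [ha, ENNReal.toReal_mul],
      mul_div_mul_left _ _ hatR.ne']
end
end

section
/- Fix a rank-r projector P_r, data y, a proposal density q(·|x_r) on Im(P_r), and a fixed approximate reduced likelihood L̃_N^y: Im(P_r) → ℝ_{>0}. Consider the two-stage Metropolis–Hastings method: from state (x_r, x_⊥), propose x_r† ∼ q(·|x_r); with first-stage probability α(x_r†|x_r) = min{1, [L̃_N^y(x_r†) π_pr(x_r†) q(x_r|x_r†)] / [L̃_N^y(x_r) π_pr(x_r) q(x_r†|x_r)]} proceed to the second stage, where x_⊥† ∼ π_pr(·|x_r†) is drawn and the pair (x_r†, x_⊥†) is accepted with probability β(x_r†, x_⊥† | x_r, x_⊥) = min{1,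 [L^y(x_r† + x_⊥†) L̃_N^y(x_r)] / [L^y(x_r + x_⊥) L̃_N^y(x_r†)]}; otherwise the chain stays at (x_r, x_⊥). Then this procedure constructs a Markov chain on ℝ^d with the full posterior π_pos^y(x) ∝ L^y(x)π_pr(x) as its invariant density. -/
open MeasureTheory Matrix

noncomputable section

/-- Reference (product) measure on `Im(P) × Ker(P)`. -/
def daMeasure {d : ℕ} (P : Matrix (Fin d) (Fin d) ℝ) (r : ℕ) :
    Measure ((Fin d → ℝ) × (Fin d → ℝ)) :=
  ((μH[((r : ℝ))]).restrict (Set.range P.mulVec)).prod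
    ((μH[((d - r : ℕ) : ℝ)]).restrict {z : Fin d → ℝ | P.mulVec z = 0})

/-- Density (w.r.t. `daMeasure`) of an accepted two-stage (delayed-acceptance) move from
`s = (x_r, x⊥)` to `t = (x_r†, x⊥†)`: first-stage proposal `q` with acceptance
probability `α`, second-stage proposal `π_pr(x⊥†|x_r†)` with acceptance probability
`β`. -/
def daMoveDensity {d : ℕ} (P : Matrix (Fin d) (Fin d) ℝ) (r : ℕ)
    (πpr L Lt : (Fin d → ℝ) → ℝ) (q : (Fin d → ℝ) → (Fin d → ℝ) → ℝ)
    (t s : (Fin d → ℝ) × (Fin d → ℝ)) : ℝ :=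
  q t.1 s.1 *
    min 1 ((Lt t.1 * margDensity P r πpr t.1 * q s.1 t.1) /
      (Lt s.1 * margDensity P r πpr s.1 * q t.1 s.1)) *
    condDensity P r πpr t.1 t.2 *
    min 1 ((L (t.1 + t.2) * Lt s.1) / (L (s.1 + s.2) * Lt t.1))

open MeasureTheory Metric in
lemma sigmaFinite_hausdorff_restrict {n k : ℕ} (V : Submodule ℝ (Fin n → ℝ))
    (hk : Module.finrank ℝ V = k) :
    SigmaFinite ((μH[(k : ℝ)]).restrict (V : Set (Fin n → ℝ))) := by
  have hVclosed : IsClosed (V : Set (Fin n → ℝ)) := Submodule.closed_of_finiteDimensional V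
  have : IsFiniteMeasureOnCompacts ((μH[(k : ℝ)]).restrict (V : Set (Fin n → ℝ))) := by
    constructor
    intro K hK
    rw [MeasureTheory.Measure.restrict_apply' hVclosed.measurableSet]
    let b : Module.Basis (Fin k) ℝ V := Module.finBasisOfFinrankEq ℝ V hk
    let φ : (Fin k → ℝ) →ₗ[ℝ] (Fin n → ℝ) := V.subtype ∘ₗ (b.equivFun.symm : (Fin k → ℝ) →ₗ[ℝ] V)
    have hφinj : LinearMap.ker φ = ⊥ := by
      rw [LinearMap.ker_eq_bot]
      exact V.injective_subtype.comp b.equivFun.symm.injective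
    obtain ⟨C, hC0, hC⟩ := φ.exists_antilipschitzWith hφinj
    have hlip : LipschitzWith ‖LinearMap.toContinuousLinearMap φ‖₊ φ :=
      (LinearMap.toContinuousLinearMap φ).lipschitz
    obtain ⟨R, hR⟩ := hK.isBounded.subset_closedBall 0
    have hsub : K ∩ (V : Set (Fin n → ℝ)) ⊆ φ '' (φ ⁻¹' closedBall 0 R) := by
      rintro v ⟨hvK, hvV⟩
      have hv : φ (b.equivFun ⟨v, hvV⟩) = v := by
        show V.subtype (b.equivFun.symm (b.equivFun ⟨v, hvV⟩)) = v
        rw [LinearEquiv.symm_apply_apply]; rfl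
      exact ⟨b.equivFun ⟨v, hvV⟩, by rw [Set.mem_preimage, hv]; exact hR hvK, hv⟩
    have hT : φ ⁻¹' closedBall 0 R ⊆ closedBall 0 (C * R) := by
      intro w hw
      simp only [Set.mem_preimage, mem_closedBall, dist_zero_right] at hw ⊢
      calc ‖w‖ = dist w 0 := (dist_zero_right w).symm
        _ ≤ C * dist (φ w) (φ 0) := hC.le_mul_dist w 0
        _ ≤ C * R := by
            rw [map_zero, dist_zero_right]
            exact mul_le_mul_of_nonneg_left hw C.coe_nonneg
    have hvol : (μH[(k : ℝ)] : Measure (Fin k → ℝ)) = volume := by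
      have := MeasureTheory.hausdorffMeasure_pi_real (ι := Fin k)
      simpa using this
    calc μH[(k : ℝ)] (K ∩ (V : Set (Fin n → ℝ)))
        ≤ μH[(k : ℝ)] (φ '' (φ ⁻¹' closedBall 0 R)) := measure_mono hsub
      _ ≤ (‖LinearMap.toContinuousLinearMap φ‖₊ : ENNReal) ^ (k : ℝ) *
            μH[(k : ℝ)] (φ ⁻¹' closedBall 0 R) :=
          hlip.hausdorffMeasure_image_le (by positivity) _
      _ ≤ (‖LinearMap.toContinuousLinearMap φ‖₊ : ENNReal) ^ (k : ℝ) *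
            μH[(k : ℝ)] (closedBall 0 (C * R)) :=
          mul_le_mul_right (measure_mono hT) _
      _ < ⊤ := by
          rw [hvol]
          exact ENNReal.mul_lt_top (ENNReal.rpow_lt_top_of_nonneg (by positivity)
            ENNReal.coe_ne_top) measure_closedBall_lt_top
  infer_instance

lemma min_one_div_aux {x y : ℝ} (hy : 0 < y) : min 1 (x / y) = min y x / y := by
  rw [← div_self hy.ne', min_div_div_right hy.le]

lemma db_alg (E Ls Ltv ps pt ms mt q1 q2 lts ltt : ℝ)
    (hLs : 0 ≤ Ls) (hLtv : 0 ≤ Ltv) (hps : 0 ≤ ps) (hpt : 0 ≤ pt)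
    (hms : 0 ≤ ms) (hmt : 0 ≤ mt) (hq1 : 0 ≤ q1) (hq2 : 0 ≤ q2)
    (hlts : 0 < lts) (hltt : 0 < ltt) :
    Ls * ps / E * (q1 * min 1 ((ltt * mt * q2) / (lts * ms * q1)) * (pt / mt) *
        min 1 ((Ltv * lts) / (Ls * ltt)))
    = Ltv * pt / E * (q2 * min 1 ((lts * ms * q1) / (ltt * mt * q2)) * (ps / ms) *
        min 1 ((Ls * ltt) / (Ltv * lts))) := by
  have hmin10 : min (1:ℝ) 0 = 0 := min_eq_right zero_le_one
  rcases hms.eq_or_lt with h | hms; · simp [← h, hmin10]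
  rcases hmt.eq_or_lt with h | hmt; · simp [← h, hmin10]
  rcases hq1.eq_or_lt with h | hq1; · simp [← h, hmin10]
  rcases hq2.eq_or_lt with h | hq2; · simp [← h, hmin10]
  rcases hLs.eq_or_lt with h | hLs; · simp [← h, hmin10]
  rcases hLtv.eq_or_lt with h | hLtv; · simp [← h, hmin10]
  rcases hps.eq_or_lt with h | hps; · simp [← h, hmin10]
  rcases hpt.eq_or_lt with h | hpt; · simp [← h, hmin10]
  rw [min_one_div_aux (by positivity), min_one_div_aux (by positivity),
      min_one_div_aux (by positivity), min_one_div_aux (by positivity),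
      min_comm (ltt * mt * q2), min_comm (Ltv * lts)]
  generalize (min (lts * ms * q1) (ltt * mt * q2)) = a
  generalize (min (Ls * ltt) (Ltv * lts)) = b
  rw [div_mul_eq_mul_div, div_mul_eq_mul_div]
  congr 1
  field_simp

lemma prod_min_le (a c x y : ℝ) (ha : 0 ≤ a) (hc : 0 ≤ c) (hx : 0 ≤ x) (hy : 0 ≤ y) :
    a * min 1 x * c * min 1 y ≤ a * c := by
  have h1 : min 1 x ≤ 1 := min_le_left _ _
  have h0 : 0 ≤ min 1 x := le_min zero_le_one hx
  have h2 : min 1 y ≤ 1 := min_le_left _ _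
  have h0' : 0 ≤ min 1 y := le_min zero_le_one hy
  nlinarith [mul_nonneg ha hc, mul_nonneg (mul_nonneg ha h0) hc]

/-- Proposition 5. The two-stage (delayed-acceptance)
Metropolis–Hastings method with first-stage acceptance probability `α` based on the
approximate reduced likelihood `L̃_N` and second-stage acceptance probability `β`
constructs a Markov chain having the full posterior `π_pos^y` as invariant density. -/
theorem statement17 {d : ℕ}
    (πpr : (Fin d → ℝ) → ℝ) (hπpr : IsDensity πpr)
    (L : (Fin d → ℝ) → ℝ) (hL_meas : Measurable L) (hL_nonneg : ∀ x, 0 ≤ L x)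
    (hpos : 0 < evidence πpr L)
    (r : ℕ) (P : Matrix (Fin d) (Fin d) ℝ) (hP : IsProjector P r)
    (q : (Fin d → ℝ) → (Fin d → ℝ) → ℝ)
    (hq_meas : Measurable fun p : (Fin d → ℝ) × (Fin d → ℝ) => q p.1 p.2)
    (hq_nonneg : ∀ a b, 0 ≤ q a b)
    (hq_dens : ∀ xr ∈ Set.range P.mulVec,
      (∫ t in Set.range P.mulVec, q t xr ∂(μH[((r : ℕ) : ℝ)])) = 1)
    (Lt : (Fin d → ℝ) → ℝ) (hLt_meas : Measurable Lt) (hLt_pos : ∀ xr, 0 < Lt xr) :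
    ∀ A : Set ((Fin d → ℝ) × (Fin d → ℝ)), MeasurableSet A →
      (∫ s, posteriorDensity πpr L (s.1 + s.2) *
          ((∫ t in A, daMoveDensity P r πpr L Lt q t s ∂(daMeasure P r)) +
            (1 - ∫ t, daMoveDensity P r πpr L Lt q t s ∂(daMeasure P r)) *
              Set.indicator A (fun _ => (1 : ℝ)) s)
        ∂(daMeasure P r))
        = ∫ s in A, posteriorDensity πpr L (s.1 + s.2) ∂(daMeasure P r) := by
  classical
  intro A hA
  obtain ⟨hπm, hπ0, -⟩ := hπpr
  -- the two factor measures
  set μ1 : Measure (Fin d → ℝ) := (μH[((r : ℕ) : ℝ)]).restrict (Set.range P.mulVec) with hμ1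
  set μ2 : Measure (Fin d → ℝ) :=
    (μH[((d - r : ℕ) : ℝ)]).restrict {z : Fin d → ℝ | P.mulVec z = 0} with hμ2
  have hνdef : daMeasure P r = μ1.prod μ2 := rfl
  -- identification with submodules, sigma-finiteness
  have hrange_eq : Set.range P.mulVec
      = ((LinearMap.range (Matrix.mulVecLin P) : Submodule ℝ (Fin d → ℝ)) :
          Set (Fin d → ℝ)) := by
    ext x
    simp [LinearMap.mem_range, Set.mem_range]
  have hker_eq : {z : Fin d → ℝ | P.mulVec z = 0}
      = ((LinearMap.ker (Matrix.mulVecLin P) : Submodule ℝ (Fin d → ℝ)) :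
          Set (Fin d → ℝ)) := by
    ext z
    simp [LinearMap.mem_ker]
  have hfr : Module.finrank ℝ (LinearMap.range (Matrix.mulVecLin P)) = r := hP.2
  have hfk : Module.finrank ℝ (LinearMap.ker (Matrix.mulVecLin P)) = d - r := by
    have h1 := LinearMap.finrank_range_add_finrank_ker (Matrix.mulVecLin P)
    rw [hfr] at h1
    simp only [Module.finrank_pi, Fintype.card_fin] at h1
    omega
  haveI hSF1 : SigmaFinite μ1 := by
    rw [hμ1, hrange_eq]
    exact sigmaFinite_hausdorff_restrict _ hfr
  haveI hSF2 : SigmaFinite μ2 := by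
    rw [hμ2, hker_eq]
    exact sigmaFinite_hausdorff_restrict _ hfk
  have hRmeas : MeasurableSet (Set.range P.mulVec) := by
    rw [hrange_eq]
    exact (Submodule.closed_of_finiteDimensional _).measurableSet
  -- basic measurability
  have hmadd : Measurable fun p : (Fin d → ℝ) × (Fin d → ℝ) => p.1 + p.2 :=
    measurable_fst.add measurable_snd
  have hmarg_meas : Measurable (margDensity P r πpr) := by
    have h : StronglyMeasurable fun p : (Fin d → ℝ) × (Fin d → ℝ) => πpr (p.1 + p.2) :=
      (hπm.comp hmadd).stronglyMeasurable
    exact h.integral_prod_right'.measurable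
  have hmarg0 : ∀ xr, 0 ≤ margDensity P r πpr xr := fun xr =>
    integral_nonneg fun z => hπ0 _
  have hcond0 : ∀ xr z, 0 ≤ condDensity P r πpr xr z := fun xr z =>
    div_nonneg (hπ0 _) (hmarg0 xr)
  have hcond_meas : Measurable fun p : (Fin d → ℝ) × (Fin d → ℝ) =>
      condDensity P r πpr p.1 p.2 :=
    (hπm.comp hmadd).div (hmarg_meas.comp measurable_fst)
  have hK_meas : Measurable fun p : ((Fin d → ℝ) × (Fin d → ℝ)) × ((Fin d → ℝ) × (Fin d → ℝ)) =>
      daMoveDensity P r πpr L Lt q p.1 p.2 := by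
    unfold daMoveDensity
    refine (((hq_meas.comp ((measurable_fst.fst).prodMk (measurable_snd.fst))).mul
      (measurable_const.min (Measurable.div
        (((hLt_meas.comp measurable_fst.fst).mul
            (hmarg_meas.comp measurable_fst.fst)).mul
          (hq_meas.comp ((measurable_snd.fst).prodMk (measurable_fst.fst))))
        (((hLt_meas.comp measurable_snd.fst).mul
            (hmarg_meas.comp measurable_snd.fst)).mul
          (hq_meas.comp ((measurable_fst.fst).prodMk (measurable_snd.fst))))))).mul
      (hcond_meas.comp measurable_fst)).mul
      (measurable_const.min (Measurable.div
        ((hL_meas.comp (hmadd.comp measurable_fst)).mul (hLt_meas.comp measurable_snd.fst))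
        ((hL_meas.comp (hmadd.comp measurable_snd)).mul (hLt_meas.comp measurable_fst.fst))))
  have hπhat_meas : Measurable fun s : (Fin d → ℝ) × (Fin d → ℝ) =>
      posteriorDensity πpr L (s.1 + s.2) := by
    unfold posteriorDensity
    exact ((hL_meas.comp hmadd).mul (hπm.comp hmadd)).div_const _
  have hπhat0 : ∀ s : (Fin d → ℝ) × (Fin d → ℝ), 0 ≤ posteriorDensity πpr L (s.1 + s.2) :=
    fun s => div_nonneg (mul_nonneg (hL_nonneg _) (hπ0 _)) hpos.le
  have hK0 : ∀ t s : (Fin d → ℝ) × (Fin d → ℝ), 0 ≤ daMoveDensity P r πpr L Lt q t s := by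
    intro t s
    unfold daMoveDensity
    refine mul_nonneg (mul_nonneg (mul_nonneg (hq_nonneg _ _)
      (le_min zero_le_one (div_nonneg ?_ ?_))) (hcond0 _ _))
      (le_min zero_le_one (div_nonneg ?_ ?_))
    · exact mul_nonneg (mul_nonneg (hLt_pos _).le (hmarg0 _)) (hq_nonneg _ _)
    · exact mul_nonneg (mul_nonneg (hLt_pos _).le (hmarg0 _)) (hq_nonneg _ _)
    · exact mul_nonneg (hL_nonneg _) (hLt_pos _).le
    · exact mul_nonneg (hL_nonneg _) (hLt_pos _).le
  -- pointwise detailed balance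
  have hdb : ∀ s t : (Fin d → ℝ) × (Fin d → ℝ),
      posteriorDensity πpr L (s.1 + s.2) * daMoveDensity P r πpr L Lt q t s
        = posteriorDensity πpr L (t.1 + t.2) * daMoveDensity P r πpr L Lt q s t := by
    intro s t
    unfold posteriorDensity daMoveDensity condDensity
    exact db_alg (evidence πpr L) _ _ _ _ _ _ _ _ _ _
      (hL_nonneg _) (hL_nonneg _) (hπ0 _) (hπ0 _) (hmarg0 _) (hmarg0 _)
      (hq_nonneg _ _) (hq_nonneg _ _) (hLt_pos _) (hLt_pos _)
  -- conditional density integrates (in ℝ≥0∞) to at most 1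
  have hcondlint : ∀ xr, (∫⁻ z, ENNReal.ofReal (condDensity P r πpr xr z) ∂μ2) ≤ 1 := by
    intro xr
    by_cases hm0 : margDensity P r πpr xr = 0
    · have hz : ∀ z, condDensity P r πpr xr z = 0 := by
        intro z; unfold condDensity; rw [hm0, div_zero]
      simp [hz]
    · have hmpos : 0 < margDensity P r πpr xr := (hmarg0 xr).lt_of_ne (Ne.symm hm0)
      have hint : Integrable (fun z => πpr (xr + z)) μ2 := by
        by_contra h
        exact hm0 (integral_undef h)
      have hln : (∫⁻ z, ENNReal.ofReal (πpr (xr + z)) ∂μ2)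
          = ENNReal.ofReal (margDensity P r πpr xr) :=
        (ofReal_integral_eq_lintegral_ofReal hint
          (Filter.Eventually.of_forall fun z => hπ0 _)).symm
      calc (∫⁻ z, ENNReal.ofReal (condDensity P r πpr xr z) ∂μ2)
          = ∫⁻ z, ENNReal.ofReal (πpr (xr + z))
              * ENNReal.ofReal (margDensity P r πpr xr)⁻¹ ∂μ2 := by
            refine lintegral_congr fun z => ?_
            unfold condDensity
            rw [div_eq_mul_inv, ENNReal.ofReal_mul (hπ0 _)]
        _ = ENNReal.ofReal (margDensity P r πpr xr)
              * ENNReal.ofReal (margDensity P r πpr xr)⁻¹ := by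
            rw [lintegral_mul_const' _ _ ENNReal.ofReal_ne_top, hln]
        _ ≤ 1 := by
            rw [← ENNReal.ofReal_mul hmpos.le, mul_inv_cancel₀ hm0]
            simp
  -- the proposal density integrates to 1 in ℝ≥0∞
  have hqlint : ∀ xr ∈ Set.range P.mulVec,
      (∫⁻ t1, ENNReal.ofReal (q t1 xr) ∂μ1) = 1 := by
    intro xr hxr
    have h1 : (∫ t1, q t1 xr ∂μ1) = 1 := hq_dens xr hxr
    have hint : Integrable (fun t1 => q t1 xr) μ1 := by
      by_contra h
      rw [integral_undef h] at h1
      norm_num at h1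
    rw [← ofReal_integral_eq_lintegral_ofReal hint
      (Filter.Eventually.of_forall fun t => hq_nonneg _ _), h1, ENNReal.ofReal_one]
  -- a.e. the first component is in the range of P
  have hae1 : ∀ᵐ s ∂(μ1.prod μ2), s.1 ∈ Set.range P.mulVec := by
    rw [MeasureTheory.ae_iff]
    have hs : {s : (Fin d → ℝ) × (Fin d → ℝ) | ¬ s.1 ∈ Set.range P.mulVec}
        = (Set.range P.mulVec)ᶜ ×ˢ (Set.univ : Set (Fin d → ℝ)) := by
      ext s; simp
    rw [hs, Measure.prod_prod]
    have hz : μ1 ((Set.range P.mulVec)ᶜ) = 0 := by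
      rw [hμ1, Measure.restrict_apply' hRmeas, Set.compl_inter_self, measure_empty]
    rw [hz, zero_mul]
  -- bound on the move density
  have hKle : ∀ t s : (Fin d → ℝ) × (Fin d → ℝ), daMoveDensity P r πpr L Lt q t s
      ≤ q t.1 s.1 * condDensity P r πpr t.1 t.2 := by
    intro t s
    unfold daMoveDensity
    have h := prod_min_le (q t.1 s.1) (condDensity P r πpr t.1 t.2)
      ((Lt t.1 * margDensity P r πpr t.1 * q s.1 t.1)
        / (Lt s.1 * margDensity P r πpr s.1 * q t.1 s.1))
      ((L (t.1 + t.2) * Lt s.1) / (L (s.1 + s.2) * Lt t.1))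
      (hq_nonneg _ _) (hcond0 _ _)
      (div_nonneg (mul_nonneg (mul_nonneg (hLt_pos _).le (hmarg0 _)) (hq_nonneg _ _))
        (mul_nonneg (mul_nonneg (hLt_pos _).le (hmarg0 _)) (hq_nonneg _ _)))
      (div_nonneg (mul_nonneg (hL_nonneg _) (hLt_pos _).le)
        (mul_nonneg (hL_nonneg _) (hLt_pos _).le))
    exact h
  -- total acceptance mass is at most one
  have hH'le : ∀ s : (Fin d → ℝ) × (Fin d → ℝ), s.1 ∈ Set.range P.mulVec →
      (∫⁻ t, ENNReal.ofReal (daMoveDensity P r πpr L Lt q t s) ∂(μ1.prod μ2)) ≤ 1 := by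
    intro s hs
    have step1 : (∫⁻ t, ENNReal.ofReal (daMoveDensity P r πpr L Lt q t s) ∂(μ1.prod μ2))
        ≤ ∫⁻ t : (Fin d → ℝ) × (Fin d → ℝ),
            ENNReal.ofReal (q t.1 s.1) * ENNReal.ofReal (condDensity P r πpr t.1 t.2)
            ∂(μ1.prod μ2) := by
      refine lintegral_mono fun t => ?_
      rw [← ENNReal.ofReal_mul (hq_nonneg _ _)]
      exact ENNReal.ofReal_le_ofReal (hKle t s)
    refine step1.trans ?_
    have hm : Measurable (fun t : (Fin d → ℝ) × (Fin d → ℝ) =>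
        ENNReal.ofReal (q t.1 s.1) * ENNReal.ofReal (condDensity P r πpr t.1 t.2)) :=
      ((hq_meas.comp (measurable_fst.prodMk measurable_const)).ennreal_ofReal).mul
        hcond_meas.ennreal_ofReal
    rw [lintegral_prod _ hm.aemeasurable]
    calc (∫⁻ t1, ∫⁻ t2, ENNReal.ofReal (q t1 s.1)
            * ENNReal.ofReal (condDensity P r πpr t1 t2) ∂μ2 ∂μ1)
        = ∫⁻ t1, ENNReal.ofReal (q t1 s.1)
            * ∫⁻ t2, ENNReal.ofReal (condDensity P r πpr t1 t2) ∂μ2 ∂μ1 := by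
          refine lintegral_congr fun t1 => ?_
          rw [lintegral_const_mul' _ _ ENNReal.ofReal_ne_top]
      _ ≤ ∫⁻ t1, ENNReal.ofReal (q t1 s.1) * 1 ∂μ1 :=
          lintegral_mono fun t1 => mul_le_mul_right (hcondlint t1) _
      _ = ∫⁻ t1, ENNReal.ofReal (q t1 s.1) ∂μ1 := by simp
      _ = 1 := hqlint s.1 hs
  simp only [hνdef]
  set ν : Measure ((Fin d → ℝ) × (Fin d → ℝ)) := μ1.prod μ2 with hν
  -- ENNReal-valued auxiliary integrals
  have hind : ∀ (f : ((Fin d → ℝ) × (Fin d → ℝ)) → ENNReal) (t),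
      A.indicator f t = A.indicator (fun _ => (1 : ENNReal)) t * f t := by
    intro f t
    by_cases h : t ∈ A <;> simp [h]
  have hindne : ∀ t, A.indicator (fun _ => (1 : ENNReal)) t ≠ ⊤ := by
    intro t
    by_cases h : t ∈ A <;> simp [h]
  have hKsec : ∀ s, Measurable fun t => daMoveDensity P r πpr L Lt q t s := by
    intro s
    exact hK_meas.comp (measurable_id.prodMk measurable_const)
  have hKswap_meas : Measurable
      (fun p : ((Fin d → ℝ) × (Fin d → ℝ)) × ((Fin d → ℝ) × (Fin d → ℝ)) =>
        daMoveDensity P r πpr L Lt q p.2 p.1) :=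
    hK_meas.comp (measurable_snd.prodMk measurable_fst)
  have hG'meas : Measurable fun s => ∫⁻ t, A.indicator (fun _ => (1 : ENNReal)) t
      * ENNReal.ofReal (daMoveDensity P r πpr L Lt q t s) ∂ν := by
    refine Measurable.lintegral_prod_right ?_
    exact (((measurable_one.indicator hA).comp measurable_snd).mul
      hKswap_meas.ennreal_ofReal)
  have hH'meas : Measurable fun s =>
      ∫⁻ t, ENNReal.ofReal (daMoveDensity P r πpr L Lt q t s) ∂ν := by
    refine Measurable.lintegral_prod_right ?_
    exact hKswap_meas.ennreal_ofReal
  -- relating the real set-integrals to ENNReal ones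
  have hGrepr : ∀ s, (∫ t in A, daMoveDensity P r πpr L Lt q t s ∂ν)
      = (∫⁻ t, A.indicator (fun _ => (1 : ENNReal)) t
          * ENNReal.ofReal (daMoveDensity P r πpr L Lt q t s) ∂ν).toReal := by
    intro s
    rw [integral_eq_lintegral_of_nonneg_ae
      (Filter.Eventually.of_forall fun t => hK0 t s)
      (hKsec s).aestronglyMeasurable.restrict]
    congr 1
    rw [← lintegral_indicator hA]
    exact lintegral_congr fun t => hind _ t
  have hHrepr : ∀ s, (∫ t, daMoveDensity P r πpr L Lt q t s ∂ν)
      = (∫⁻ t, ENNReal.ofReal (daMoveDensity P r πpr L Lt q t s) ∂ν).toReal := by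
    intro s
    rw [integral_eq_lintegral_of_nonneg_ae
      (Filter.Eventually.of_forall fun t => hK0 t s)
      (hKsec s).aestronglyMeasurable]
  have hG'leH' : ∀ s, (∫⁻ t, A.indicator (fun _ => (1 : ENNReal)) t
      * ENNReal.ofReal (daMoveDensity P r πpr L Lt q t s) ∂ν)
      ≤ ∫⁻ t, ENNReal.ofReal (daMoveDensity P r πpr L Lt q t s) ∂ν := by
    intro s
    refine lintegral_mono fun t => ?_
    by_cases h : t ∈ A <;> simp [h]
  -- the key ENNReal computation: symmetry + Tonelli
  have hswap_key : (∫⁻ s, ENNReal.ofReal (posteriorDensity πpr L (s.1 + s.2))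
        * (∫⁻ t, A.indicator (fun _ => (1 : ENNReal)) t
            * ENNReal.ofReal (daMoveDensity P r πpr L Lt q t s) ∂ν) ∂ν)
      = ∫⁻ s, A.indicator (fun _ => (1 : ENNReal)) s
          * (ENNReal.ofReal (posteriorDensity πpr L (s.1 + s.2))
            * ∫⁻ t, ENNReal.ofReal (daMoveDensity P r πpr L Lt q t s) ∂ν) ∂ν := by
    have hmeas2 : AEMeasurable (Function.uncurry fun s t =>
        ENNReal.ofReal (posteriorDensity πpr L (s.1 + s.2))
          * (A.indicator (fun _ => (1 : ENNReal)) t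
            * ENNReal.ofReal (daMoveDensity P r πpr L Lt q t s))) (ν.prod ν) := by
      refine Measurable.aemeasurable ?_
      exact ((hπhat_meas.comp measurable_fst).ennreal_ofReal).mul
        (((measurable_one.indicator hA).comp measurable_snd).mul
          ((hK_meas.comp (measurable_snd.prodMk measurable_fst)).ennreal_ofReal))
    calc (∫⁻ s, ENNReal.ofReal (posteriorDensity πpr L (s.1 + s.2))
          * (∫⁻ t, A.indicator (fun _ => (1 : ENNReal)) t
              * ENNReal.ofReal (daMoveDensity P r πpr L Lt q t s) ∂ν) ∂ν)
        = ∫⁻ s, ∫⁻ t, ENNReal.ofReal (posteriorDensity πpr L (s.1 + s.2))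
            * (A.indicator (fun _ => (1 : ENNReal)) t
              * ENNReal.ofReal (daMoveDensity P r πpr L Lt q t s)) ∂ν ∂ν :=
          lintegral_congr fun s =>
            (lintegral_const_mul' _ _ ENNReal.ofReal_ne_top).symm
      _ = ∫⁻ t, ∫⁻ s, ENNReal.ofReal (posteriorDensity πpr L (s.1 + s.2))
            * (A.indicator (fun _ => (1 : ENNReal)) t
              * ENNReal.ofReal (daMoveDensity P r πpr L Lt q t s)) ∂ν ∂ν :=
          lintegral_lintegral_swap hmeas2
      _ = ∫⁻ t, A.indicator (fun _ => (1 : ENNReal)) t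
            * ∫⁻ s, ENNReal.ofReal (posteriorDensity πpr L (s.1 + s.2))
              * ENNReal.ofReal (daMoveDensity P r πpr L Lt q t s) ∂ν ∂ν := by
          refine lintegral_congr fun t => ?_
          rw [← lintegral_const_mul' _ _ (hindne t)]
          exact lintegral_congr fun s => by ring
      _ = ∫⁻ t, A.indicator (fun _ => (1 : ENNReal)) t
            * (ENNReal.ofReal (posteriorDensity πpr L (t.1 + t.2))
              * ∫⁻ s, ENNReal.ofReal (daMoveDensity P r πpr L Lt q s t) ∂ν) ∂ν := by
          refine lintegral_congr fun t => ?_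
          congr 1
          calc (∫⁻ s, ENNReal.ofReal (posteriorDensity πpr L (s.1 + s.2))
                * ENNReal.ofReal (daMoveDensity P r πpr L Lt q t s) ∂ν)
              = ∫⁻ s, ENNReal.ofReal (posteriorDensity πpr L (t.1 + t.2))
                * ENNReal.ofReal (daMoveDensity P r πpr L Lt q s t) ∂ν := by
                refine lintegral_congr fun s0 => ?_
                rw [← ENNReal.ofReal_mul (hπhat0 _), ← ENNReal.ofReal_mul (hπhat0 _),
                  hdb s0 t]
            _ = ENNReal.ofReal (posteriorDensity πpr L (t.1 + t.2))
                * ∫⁻ s, ENNReal.ofReal (daMoveDensity P r πpr L Lt q s t) ∂ν :=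
                lintegral_const_mul' _ _ ENNReal.ofReal_ne_top
  -- main ENNReal identity
  have hmain : (∫⁻ s, ENNReal.ofReal (posteriorDensity πpr L (s.1 + s.2))
        * ((∫⁻ t, A.indicator (fun _ => (1 : ENNReal)) t
            * ENNReal.ofReal (daMoveDensity P r πpr L Lt q t s) ∂ν)
          + (1 - ∫⁻ t, ENNReal.ofReal (daMoveDensity P r πpr L Lt q t s) ∂ν)
            * A.indicator (fun _ => (1 : ENNReal)) s) ∂ν)
      = ∫⁻ s, A.indicator (fun _ => (1 : ENNReal)) s
          * ENNReal.ofReal (posteriorDensity πpr L (s.1 + s.2)) ∂ν := by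
    have hsplit : (fun s => ENNReal.ofReal (posteriorDensity πpr L (s.1 + s.2))
        * ((∫⁻ t, A.indicator (fun _ => (1 : ENNReal)) t
            * ENNReal.ofReal (daMoveDensity P r πpr L Lt q t s) ∂ν)
          + (1 - ∫⁻ t, ENNReal.ofReal (daMoveDensity P r πpr L Lt q t s) ∂ν)
            * A.indicator (fun _ => (1 : ENNReal)) s))
        = fun s => (ENNReal.ofReal (posteriorDensity πpr L (s.1 + s.2))
            * (∫⁻ t, A.indicator (fun _ => (1 : ENNReal)) t
              * ENNReal.ofReal (daMoveDensity P r πpr L Lt q t s) ∂ν))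
          + (ENNReal.ofReal (posteriorDensity πpr L (s.1 + s.2))
            * ((1 - ∫⁻ t, ENNReal.ofReal (daMoveDensity P r πpr L Lt q t s) ∂ν)
              * A.indicator (fun _ => (1 : ENNReal)) s)) := by
      funext s; ring
    have hmeas3 : Measurable (fun s : (Fin d → ℝ) × (Fin d → ℝ) =>
        A.indicator (fun _ => (1 : ENNReal)) s
          * (ENNReal.ofReal (posteriorDensity πpr L (s.1 + s.2))
            * ∫⁻ t, ENNReal.ofReal (daMoveDensity P r πpr L Lt q t s) ∂ν)) :=
      ((measurable_const.indicator hA)).mul ((hπhat_meas.ennreal_ofReal).mul hH'meas)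
    rw [hsplit, lintegral_add_left (show
      Measurable fun s => ENNReal.ofReal (posteriorDensity πpr L (s.1 + s.2))
        * (∫⁻ t, A.indicator (fun _ => (1 : ENNReal)) t
          * ENNReal.ofReal (daMoveDensity P r πpr L Lt q t s) ∂ν)
      from (hπhat_meas.ennreal_ofReal).mul hG'meas), hswap_key,
      ← lintegral_add_left hmeas3]
    refine lintegral_congr_ae ?_
    filter_upwards [hae1] with s hs
    by_cases hsa : s ∈ A
    · simp only [Set.indicator_of_mem hsa, one_mul, mul_one]
      rw [← mul_add, add_tsub_cancel_of_le (hH'le s hs), mul_one]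
    · simp [Set.indicator_of_notMem hsa]
  -- translate the real-valued goal into ENNReal
  have hLHS : (∫ s, posteriorDensity πpr L (s.1 + s.2) *
        ((∫ t in A, daMoveDensity P r πpr L Lt q t s ∂ν) +
          (1 - ∫ t, daMoveDensity P r πpr L Lt q t s ∂ν) *
            Set.indicator A (fun _ => (1 : ℝ)) s) ∂ν)
      = (∫⁻ s, ENNReal.ofReal (posteriorDensity πpr L (s.1 + s.2))
          * ((∫⁻ t, A.indicator (fun _ => (1 : ENNReal)) t
              * ENNReal.ofReal (daMoveDensity P r πpr L Lt q t s) ∂ν)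
            + (1 - ∫⁻ t, ENNReal.ofReal (daMoveDensity P r πpr L Lt q t s) ∂ν)
              * A.indicator (fun _ => (1 : ENNReal)) s) ∂ν).toReal := by
    have hΦmeas : AEStronglyMeasurable (fun s =>
        posteriorDensity πpr L (s.1 + s.2) *
          ((∫ t in A, daMoveDensity P r πpr L Lt q t s ∂ν) +
            (1 - ∫ t, daMoveDensity P r πpr L Lt q t s ∂ν) *
              Set.indicator A (fun _ => (1 : ℝ)) s)) ν := by
      refine Measurable.aestronglyMeasurable ?_
      refine hπhat_meas.mul (Measurable.add ?_ (Measurable.mul ?_ ?_))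
      · exact (hKswap_meas.stronglyMeasurable.integral_prod_right').measurable
      · exact (measurable_const.sub
          (hKswap_meas.stronglyMeasurable.integral_prod_right').measurable)
      · exact measurable_const.indicator hA
    rw [integral_eq_lintegral_of_nonneg_ae ?nonneg hΦmeas]
    case nonneg =>
      filter_upwards [hae1] with s hs
      have hH1 : (∫ t, daMoveDensity P r πpr L Lt q t s ∂ν) ≤ 1 := by
        rw [hHrepr s]
        exact ENNReal.toReal_mono ENNReal.one_ne_top (hH'le s hs) |>.trans_eq ENNReal.toReal_one
      refine mul_nonneg (hπhat0 s) (add_nonneg (integral_nonneg fun t => hK0 t s)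
        (mul_nonneg (by linarith) (Set.indicator_nonneg (fun _ _ => zero_le_one) s)))
    congr 1
    refine lintegral_congr_ae ?_
    filter_upwards [hae1] with s hs
    have hH'ne : (∫⁻ t, ENNReal.ofReal (daMoveDensity P r πpr L Lt q t s) ∂ν) ≠ ⊤ :=
      ((hH'le s hs).trans_lt ENNReal.one_lt_top).ne
    have hG'ne : (∫⁻ t, A.indicator (fun _ => (1 : ENNReal)) t
        * ENNReal.ofReal (daMoveDensity P r πpr L Lt q t s) ∂ν) ≠ ⊤ :=
      (((hG'leH' s).trans (hH'le s hs)).trans_lt ENNReal.one_lt_top).ne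
    have hHle1 : (∫ t, daMoveDensity P r πpr L Lt q t s ∂ν) ≤ 1 := by
      rw [hHrepr s]
      exact ENNReal.toReal_mono ENNReal.one_ne_top (hH'le s hs) |>.trans_eq ENNReal.toReal_one
    rw [ENNReal.ofReal_mul (hπhat0 s)]
    congr 1
    rw [hGrepr s, hHrepr s]
    by_cases hsa : s ∈ A
    · simp only [Set.indicator_of_mem hsa, mul_one]
      rw [ENNReal.ofReal_add ENNReal.toReal_nonneg (by
        rw [hHrepr s] at hHle1
        linarith), ENNReal.ofReal_toReal hG'ne,
        ENNReal.ofReal_sub _ ENNReal.toReal_nonneg, ENNReal.ofReal_one,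
        ENNReal.ofReal_toReal hH'ne]
    · simp only [Set.indicator_of_notMem hsa, mul_zero, add_zero]
      rw [ENNReal.ofReal_toReal hG'ne]
  have hRHS : (∫ s in A, posteriorDensity πpr L (s.1 + s.2) ∂ν)
      = (∫⁻ s, A.indicator (fun _ => (1 : ENNReal)) s
          * ENNReal.ofReal (posteriorDensity πpr L (s.1 + s.2)) ∂ν).toReal := by
    rw [integral_eq_lintegral_of_nonneg_ae
      (Filter.Eventually.of_forall fun s => hπhat0 s)
      hπhat_meas.aestronglyMeasurable.restrict]
    congr 1
    rw [← lintegral_indicator hA]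
    exact lintegral_congr fun s => hind _ s
  rw [hLHS, hRHS, hmain]
end
end
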